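/- In a single Mallows model $\mathcal{M}_n(\phi,\pi)$ with representative vector $x$ (where $x_i = \phi^{pos_\pi(e_i)-1}/Z_n(\phi)$), for any two distinct elements $e_i, e_j$, the probability that $\{e_i, e_j\}$ occupy the first two positions (in either order) equals $c_2(\phi)\, x_i x_j$, where $c_2(\phi) = \frac{Z_n(\phi)}{Z_{n-1}(\phi)}\cdot\frac{1+\phi}{\phi}$. -/

import Mathlib

open Equiv Finset

def dkt {n : ℕ} (π π' : Equiv.Perm (Fin n)) : ℕ :=
  (Finset.univ.filter (fun p : Fin n × Fin n =>
    p.1 < p.2 ∧ ¬((π.symm p.1 < π.symm p.2) ↔ (π'.symm p.1 < π'.symm p.2)))).card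

namespace MallowsAux

def ins {m : ℕ} (a : Fin (m+1)) (e : Equiv.Perm (Fin m)) : Equiv.Perm (Fin (m+1)) :=
  (finSuccEquiv' 0).trans ((Equiv.optionCongr e).trans (finSuccEquiv' a).symm)

@[simp] lemma ins_zero {m : ℕ} (a : Fin (m+1)) (e : Equiv.Perm (Fin m)) :
    ins a e 0 = a := by
  simp [ins, finSuccEquiv'_at, finSuccEquiv'_symm_none]

@[simp] lemma ins_succ {m : ℕ} (a : Fin (m+1)) (e : Equiv.Perm (Fin m)) (k : Fin m) :
    ins a e k.succ = a.succAbove (e k) := by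
  have : (finSuccEquiv' (0 : Fin (m+1))) k.succ = some k := by
    rw [← Fin.zero_succAbove k, finSuccEquiv'_succAbove]
  simp [ins, this, finSuccEquiv'_symm_some]

@[simp] lemma ins_symm_self {m : ℕ} (a : Fin (m+1)) (e : Equiv.Perm (Fin m)) :
    (ins a e).symm a = 0 := by
  simp [ins, finSuccEquiv'_at, finSuccEquiv'_symm_none, ← Equiv.optionCongr_symm, Equiv.optionCongr_apply]

@[simp] lemma ins_symm_succAbove {m : ℕ} (a : Fin (m+1)) (e : Equiv.Perm (Fin m)) (k : Fin m) :
    (ins a e).symm (a.succAbove k) = (e.symm k).succ := by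
  have : (finSuccEquiv' (0 : Fin (m+1))).symm (some (e.symm k)) = (e.symm k).succ := by
    rw [finSuccEquiv'_symm_some, Fin.zero_succAbove]
  simp [ins, finSuccEquiv'_succAbove, this, ← Equiv.optionCongr_symm, Equiv.optionCongr_apply]

lemma dkt_one_eq {n : ℕ} (σ : Equiv.Perm (Fin n)) :
    dkt σ 1 = (Finset.univ.filter (fun p : Fin n × Fin n =>
      p.1 < p.2 ∧ σ.symm p.2 < σ.symm p.1)).card := by
  unfold dkt
  congr 1
  apply filter_congr
  rintro ⟨p1, p2⟩ -
  simp only [Equiv.Perm.one_symm, Equiv.Perm.one_apply]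
  constructor
  · rintro ⟨h, h2⟩
    refine ⟨h, ?_⟩
    have hne : σ.symm p2 ≠ σ.symm p1 := fun hc => (h.ne' (σ.symm.injective hc)).elim
    rcases lt_or_gt_of_ne hne with hlt | hgt
    · exact hlt
    · exact absurd (iff_of_true hgt h) h2
  · rintro ⟨h, h2⟩
    exact ⟨h, fun hiff => absurd (hiff.mpr h) (asymm h2)⟩

lemma dkt_ins {m : ℕ} (a : Fin (m+1)) (e : Equiv.Perm (Fin m)) :
    dkt (ins a e) 1 = (a : ℕ) + dkt e 1 := by
  classical
  rw [dkt_one_eq]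
  set σ := ins a e with hσ
  set C : Fin (m+1) × Fin (m+1) → Prop :=
    fun p => p.1 < p.2 ∧ σ.symm p.2 < σ.symm p.1 with hC
  have key := Finset.card_filter_add_card_filter_not
    (s := Finset.univ.filter C) (p := fun p : Fin (m+1) × Fin (m+1) => p.2 = a)
  rw [Finset.filter_filter, Finset.filter_filter] at key
  have hA : (Finset.univ.filter (fun p : Fin (m+1) × Fin (m+1) => C p ∧ p.2 = a)).card
      = (a : ℕ) := by
    have hset : (Finset.univ.filter (fun p : Fin (m+1) × Fin (m+1) => C p ∧ p.2 = a))
        = (Finset.Iio a) ×ˢ ({a} : Finset (Fin (m+1))) := by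
      ext ⟨p1, p2⟩
      simp only [Finset.mem_filter, Finset.mem_univ, true_and, Finset.mem_product,
        Finset.mem_Iio, Finset.mem_singleton, hC]
      constructor
      · rintro ⟨⟨h1, -⟩, rfl⟩
        exact ⟨h1, rfl⟩
      · rintro ⟨h1, rfl⟩
        refine ⟨⟨h1, ?_⟩, rfl⟩
        obtain ⟨u, hu⟩ := Fin.exists_succAbove_eq h1.ne
        rw [ins_symm_self, ← hu, ins_symm_succAbove]
        exact Fin.succ_pos _
    rw [hset, Finset.card_product, Fin.card_Iio, Finset.card_singleton, Nat.mul_one]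
  have hB : (Finset.univ.filter (fun p : Fin (m+1) × Fin (m+1) => C p ∧ ¬p.2 = a)).card
      = dkt e 1 := by
    rw [dkt_one_eq]
    refine (Finset.card_bij
      (fun (q : Fin m × Fin m) _ => ((a.succAbove q.1, a.succAbove q.2) : Fin (m+1) × Fin (m+1)))
      ?_ ?_ ?_).symm
    · rintro ⟨q1, q2⟩ hq
      simp only [Finset.mem_filter, Finset.mem_univ, true_and, hC] at hq ⊢
      refine ⟨⟨?_, ?_⟩, Fin.succAbove_ne a q2⟩
      · exact Fin.succAbove_lt_succAbove_iff.mpr hq.1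
      · rw [ins_symm_succAbove, ins_symm_succAbove]
        exact Fin.succ_lt_succ_iff.mpr hq.2
    · intro q hq r hr h
      simp only [Prod.mk.injEq] at h
      exact Prod.ext (Fin.succAbove_right_injective h.1) (Fin.succAbove_right_injective h.2)
    · rintro ⟨p1, p2⟩ hp
      simp only [Finset.mem_filter, Finset.mem_univ, true_and, hC] at hp
      obtain ⟨⟨h12, hσ12⟩, h2a⟩ := hp
      have h1a : p1 ≠ a := by
        rintro rfl
        rw [ins_symm_self] at hσ12
        exact Fin.not_lt_zero _ hσ12
      obtain ⟨u, hu⟩ := Fin.exists_succAbove_eq h1a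
      obtain ⟨v, hv⟩ := Fin.exists_succAbove_eq h2a
      refine ⟨(u, v), ?_, by simp [hu, hv]⟩
      simp only [Finset.mem_filter, Finset.mem_univ, true_and]
      constructor
      · rw [← hu, ← hv] at h12
        exact Fin.succAbove_lt_succAbove_iff.mp h12
      · rw [← hu, ← hv, ins_symm_succAbove, ins_symm_succAbove] at hσ12
        exact Fin.succ_lt_succ_iff.mp hσ12
  rw [hA, hB] at key
  exact key.symm


lemma ins_injective {m : ℕ} :
    Function.Injective (fun ae : Fin (m+1) × Equiv.Perm (Fin m) => ins ae.1 ae.2) := by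
  rintro ⟨a, e⟩ ⟨b, f⟩ h
  simp only at h
  have hab : a = b := by
    have := congrArg (fun σ : Equiv.Perm (Fin (m+1)) => σ 0) h
    simpa using this
  subst hab
  refine Prod.ext rfl (Equiv.ext fun k => ?_)
  have := congrArg (fun σ : Equiv.Perm (Fin (m+1)) => σ k.succ) h
  simp only [ins_succ] at this
  exact Fin.succAbove_right_injective this

lemma ins_bijective {m : ℕ} :
    Function.Bijective (fun ae : Fin (m+1) × Equiv.Perm (Fin m) => ins ae.1 ae.2) := by
  rw [Fintype.bijective_iff_injective_and_card]
  refine ⟨ins_injective, ?_⟩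
  simp [Fintype.card_perm, Fintype.card_prod, Nat.factorial_succ]

lemma sum_ins {m : ℕ} (f : Equiv.Perm (Fin (m+1)) → ℝ) :
    (∑ σ : Equiv.Perm (Fin (m+1)), f σ) = ∑ a : Fin (m+1), ∑ e : Equiv.Perm (Fin m), f (ins a e) := by
  have h := Fintype.sum_bijective _ (ins_bijective (m := m)) (fun ae => f (ins ae.1 ae.2)) f (fun ae => rfl)
  rw [← h, Fintype.sum_prod_type]


/-- The "doubled" kendall tau over all ordered pairs. -/
def dkt2 {n : ℕ} (π π' : Equiv.Perm (Fin n)) : ℕ :=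
  (Finset.univ.filter (fun p : Fin n × Fin n =>
    ¬((π.symm p.1 < π.symm p.2) ↔ (π'.symm p.1 < π'.symm p.2)))).card


lemma not_iff_lt_swap {α β : Type*} [LinearOrder α] [LinearOrder β] {a b : α} {c d : β}
    (hab : a ≠ b) (hcd : c ≠ d) (h : ¬(a < b ↔ c < d)) : ¬(b < a ↔ d < c) := by
  have h1 : a < b ↔ ¬ b < a := ⟨asymm, fun hl => (hab.lt_or_gt).resolve_right hl⟩
  have h2 : c < d ↔ ¬ d < c := ⟨asymm, fun hl => (hcd.lt_or_gt).resolve_right hl⟩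
  intro hiff
  exact h (by rw [h1, h2, hiff])

lemma dkt2_eq_two_mul {n : ℕ} (π π' : Equiv.Perm (Fin n)) :
    dkt2 π π' = 2 * dkt π π' := by
  classical
  unfold dkt2 dkt
  have hsplit : (Finset.univ.filter (fun p : Fin n × Fin n =>
      ¬((π.symm p.1 < π.symm p.2) ↔ (π'.symm p.1 < π'.symm p.2)))) =
      (Finset.univ.filter (fun p : Fin n × Fin n =>
        p.1 < p.2 ∧ ¬((π.symm p.1 < π.symm p.2) ↔ (π'.symm p.1 < π'.symm p.2)))) ∪
      (Finset.univ.filter (fun p : Fin n × Fin n =>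
        p.2 < p.1 ∧ ¬((π.symm p.1 < π.symm p.2) ↔ (π'.symm p.1 < π'.symm p.2)))) := by
    rw [← Finset.filter_or]
    apply filter_congr
    rintro ⟨p1, p2⟩ -
    constructor
    · intro h
      have hne : p1 ≠ p2 := by
        rintro rfl; exact h (iff_of_false (lt_irrefl _) (lt_irrefl _))
      rcases lt_or_gt_of_ne hne with hlt | hgt
      · exact Or.inl ⟨hlt, h⟩
      · exact Or.inr ⟨hgt, h⟩
    · rintro (⟨-, h⟩ | ⟨-, h⟩) <;> exact h
  rw [hsplit, Finset.card_union_of_disjoint, two_mul]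
  · congr 1
    apply Finset.card_bij' (fun p _ => Prod.swap p) (fun p _ => Prod.swap p)
    · rintro ⟨p1, p2⟩ hp
      simp only [mem_filter, mem_univ, true_and, Prod.swap_prod_mk] at hp ⊢
      have hne : p1 ≠ p2 := by rintro rfl; exact lt_irrefl _ hp.1
      exact ⟨hp.1, not_iff_lt_swap (fun hc => hne (π.symm.injective hc))
        (fun hc => hne (π'.symm.injective hc)) hp.2⟩
    · rintro ⟨p1, p2⟩ hp
      simp only [mem_filter, mem_univ, true_and, Prod.swap_prod_mk] at hp ⊢
      have hne : p1 ≠ p2 := by rintro rfl; exact lt_irrefl _ hp.1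
      exact ⟨hp.1, not_iff_lt_swap (fun hc => hne (π.symm.injective hc))
        (fun hc => hne (π'.symm.injective hc)) hp.2⟩
    · intro p _; simp
    · intro p _; simp
  · rw [Finset.disjoint_filter]
    rintro ⟨p1, p2⟩ - ⟨h1, -⟩ ⟨h2, -⟩
    exact absurd h2 (asymm h1)

lemma dkt_mul_left {n : ℕ} (τ π π' : Equiv.Perm (Fin n)) :
    dkt (τ * π) (τ * π') = dkt π π' := by
  have h2 : dkt2 (τ * π) (τ * π') = dkt2 π π' := by
    unfold dkt2
    refine (Finset.card_equiv (Equiv.prodCongr τ τ) ?_).symm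
    rintro ⟨p1, p2⟩
    simp only [Finset.mem_filter, Finset.mem_univ, true_and]
    simp [Equiv.Perm.mul_def, Equiv.symm_trans_apply]
  have := dkt2_eq_two_mul (τ * π) (τ * π')
  rw [h2, dkt2_eq_two_mul] at this
  omega


noncomputable def T (φ : ℝ) (m : ℕ) : ℝ := ∑ e : Equiv.Perm (Fin m), φ ^ dkt e 1

lemma T_def (φ : ℝ) (m : ℕ) : T φ m = ∑ e : Equiv.Perm (Fin m), φ ^ dkt e 1 := rfl

lemma T_pos {φ : ℝ} (h0 : 0 < φ) (m : ℕ) : 0 < T φ m :=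
  Finset.sum_pos (fun e _ => pow_pos h0 _) Finset.univ_nonempty

lemma T_succ (φ : ℝ) (m : ℕ) :
    T φ (m+1) = (∑ k ∈ Finset.range (m+1), φ ^ k) * T φ m := by
  rw [T_def, sum_ins (fun σ => φ ^ dkt σ 1)]
  have h1 : ∀ a : Fin (m+1),
      (∑ e : Equiv.Perm (Fin m), φ ^ dkt (ins a e) 1) = φ ^ (a : ℕ) * T φ m := by
    intro a
    rw [T_def, Finset.mul_sum]
    refine Finset.sum_congr rfl fun e _ => ?_
    rw [dkt_ins, pow_add]
  simp_rw [h1]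
  rw [← Finset.sum_mul, Fin.sum_univ_eq_sum_range (fun k => φ ^ k)]

def bstar (x y : ℕ) : ℕ := if y < x then y else y - 1

lemma val_of_succAbove {m : ℕ} {a b : Fin (m+1)} {bs : Fin m}
    (h : a.succAbove bs = b) : (bs : ℕ) = bstar (a : ℕ) (b : ℕ) := by
  unfold bstar
  rcases lt_or_ge (Fin.castSucc bs) a with hlt | hle
  · rw [Fin.succAbove_of_castSucc_lt _ _ hlt] at h
    subst h
    have : (bs : ℕ) < (a : ℕ) := hlt
    simp only [Fin.coe_castSucc]
    rw [if_pos this]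
  · rw [Fin.succAbove_of_le_castSucc _ _ hle] at h
    subst h
    have h1 : (a : ℕ) ≤ (bs : ℕ) := hle
    have h2 : ((bs.succ : Fin (m+1)) : ℕ) = (bs : ℕ) + 1 := Fin.val_succ bs
    rw [h2, if_neg (by omega)]
    omega

lemma sum_cond (φ : ℝ) {m : ℕ} (a b : Fin (m+2)) (hab : a ≠ b) :
    (∑ σ : Equiv.Perm (Fin (m+2)), if σ 0 = a ∧ σ 1 = b then φ ^ dkt σ 1 else 0)
      = φ ^ ((a : ℕ) + bstar (a : ℕ) (b : ℕ)) * T φ m := by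
  classical
  obtain ⟨bs, hbs⟩ := Fin.exists_succAbove_eq (Ne.symm hab)
  rw [sum_ins (fun σ => if σ 0 = a ∧ σ 1 = b then φ ^ dkt σ 1 else 0)]
  rw [Finset.sum_eq_single a]
  rotate_left
  · intro a' _ hne
    apply Finset.sum_eq_zero
    intro e _
    rw [if_neg]
    simp only [ins_zero]
    tauto
  · intro h; exact absurd (Finset.mem_univ a) h
  have h2 : ∀ e : Equiv.Perm (Fin (m+1)),
      (if ins a e 0 = a ∧ ins a e 1 = b then φ ^ dkt (ins a e) 1 else 0)
        = (if e 0 = bs then φ ^ ((a : ℕ) + dkt e 1) else 0) := by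
    intro e
    have hone : ins a e 1 = a.succAbove (e 0) := by
      rw [← Fin.succ_zero_eq_one', ins_succ]
    rw [ins_zero, hone, dkt_ins, ← hbs]
    simp only [true_and, Fin.succAbove_right_inj]
  simp_rw [h2]
  rw [sum_ins (fun e => if e 0 = bs then φ ^ ((a : ℕ) + dkt e 1) else 0)]
  rw [Finset.sum_eq_single bs]
  rotate_left
  · intro b' _ hne
    apply Finset.sum_eq_zero
    intro e' _
    rw [if_neg]
    simpa using hne
  · intro h; exact absurd (Finset.mem_univ bs) h
  have h3 : ∀ e' : Equiv.Perm (Fin m),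
      (if ins bs e' 0 = bs then φ ^ ((a : ℕ) + dkt (ins bs e') 1) else 0)
        = φ ^ ((a : ℕ) + (bs : ℕ)) * φ ^ dkt e' 1 := by
    intro e'
    rw [ins_zero, if_pos rfl, dkt_ins, ← Nat.add_assoc, pow_add]
  simp_rw [h3]
  rw [← Finset.mul_sum, ← T_def, val_of_succAbove hbs]

lemma pair_eq {α : Type*} [DecidableEq α] {a b i j : α} (hab : a ≠ b) (hij : i ≠ j) :
    ({a, b} : Finset α) = {i, j} ↔ (a = i ∧ b = j) ∨ (a = j ∧ b = i) := by
  constructor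
  · intro h
    have ha : a = i ∨ a = j := by
      have : a ∈ ({i, j} : Finset α) := h ▸ (by simp)
      simpa using this
    have hb : b = i ∨ b = j := by
      have : b ∈ ({i, j} : Finset α) := h ▸ (by simp)
      simpa using this
    rcases ha with rfl | rfl <;> rcases hb with rfl | rfl <;> tauto
  · rintro (⟨rfl, rfl⟩ | ⟨rfl, rfl⟩)
    · rfl
    · exact Finset.pair_comm a b

lemma core_num (φ : ℝ) {m : ℕ} (i j : Fin (m+2)) (hij : i ≠ j) :
    (∑ σ ∈ Finset.univ.filter (fun σ : Equiv.Perm (Fin (m+2)) =>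
        ({σ 0, σ 1} : Finset (Fin (m+2))) = {i, j}), φ ^ dkt σ 1)
      = φ ^ ((i : ℕ) + bstar (i : ℕ) (j : ℕ)) * T φ m
        + φ ^ ((j : ℕ) + bstar (j : ℕ) (i : ℕ)) * T φ m := by
  classical
  rw [Finset.sum_filter]
  have hsplit : ∀ σ : Equiv.Perm (Fin (m+2)),
      (if ({σ 0, σ 1} : Finset (Fin (m+2))) = {i, j} then φ ^ dkt σ 1 else 0)
        = (if σ 0 = i ∧ σ 1 = j then φ ^ dkt σ 1 else 0)
          + (if σ 0 = j ∧ σ 1 = i then φ ^ dkt σ 1 else 0) := by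
    intro σ
    have h01 : (0 : Fin (m+2)) ≠ 1 := Fin.zero_ne_one' (n := m+1)
    have hne : σ 0 ≠ σ 1 := fun h => h01 (σ.injective h)
    simp only [pair_eq hne hij]
    by_cases hc1 : σ 0 = i ∧ σ 1 = j
    · rw [if_pos (Or.inl hc1), if_pos hc1, if_neg, add_zero]
      rintro ⟨ha, -⟩
      exact hij (hc1.1.symm.trans ha)
    · by_cases hc2 : σ 0 = j ∧ σ 1 = i
      · rw [if_pos (Or.inr hc2), if_neg hc1, if_pos hc2, zero_add]
      · rw [if_neg (by tauto), if_neg hc1, if_neg hc2, add_zero]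
  simp_rw [hsplit]
  rw [Finset.sum_add_distrib, sum_cond φ i j hij, sum_cond φ j i hij.symm]

lemma T_succ2 (φ : ℝ) (m : ℕ) :
    T φ (m+2) = (∑ k ∈ Finset.range (m+2), φ ^ k)
      * ((∑ k ∈ Finset.range (m+1), φ ^ k) * T φ m) := by
  have h := T_succ φ (m+1)
  rw [T_succ φ m] at h
  exact h

lemma final_arith (φ Z1 Z2 Tm : ℝ) (hφ : 0 < φ) (hZ1 : 0 < Z1) (hZ2 : 0 < Z2)
    (hTm : 0 < Tm) (s x y : ℕ) (hs : 1 ≤ s) (hxy : x + y = s) :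
    (φ ^ (s - 1) + φ ^ s) * Tm / (Z2 * (Z1 * Tm))
      = (Z2 / Z1 * ((1 + φ) / φ)) * (φ ^ x / Z2) * (φ ^ y / Z2) := by
  obtain ⟨t, rfl⟩ : ∃ t, s = t + 1 := ⟨s - 1, by omega⟩
  have hxy' : φ ^ x * φ ^ y = φ ^ t * φ := by
    rw [← pow_add, ← pow_succ]
    congr 1
  have hR : (Z2 / Z1 * ((1 + φ) / φ)) * (φ ^ x / Z2) * (φ ^ y / Z2)
      = (Z2 / Z1 * ((1 + φ) / φ)) * ((φ ^ x * φ ^ y) / (Z2 * Z2)) := by ring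
  rw [hR, hxy', show t + 1 - 1 = t from rfl]
  field_simp
  ring

end MallowsAux

theorem mallows_second_moment (n : ℕ) (hn : 2 ≤ n) (φ : ℝ) (h0 : 0 < φ) (h1 : φ < 1)
    (π0 : Equiv.Perm (Fin n)) (i j : Fin n) (hij : i ≠ j) :
    (∑ π ∈ Finset.univ.filter (fun π : Equiv.Perm (Fin n) =>
        ({π ⟨0, by omega⟩, π ⟨1, by omega⟩} : Finset (Fin n)) = {i, j}), φ ^ dkt π π0)
      / (∑ π : Equiv.Perm (Fin n), φ ^ dkt π π0)
    = ((∑ k ∈ Finset.range n, φ ^ k) / (∑ k ∈ Finset.range (n - 1), φ ^ k)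
          * ((1 + φ) / φ))
        * (φ ^ ((π0.symm i : ℕ)) / ∑ k ∈ Finset.range n, φ ^ k)
        * (φ ^ ((π0.symm j : ℕ)) / ∑ k ∈ Finset.range n, φ ^ k) := by
  classical
  obtain ⟨m, rfl⟩ : ∃ m, n = m + 2 := ⟨n - 2, by omega⟩
  open MallowsAux in
  have h01 : ∀ (h : (0:ℕ) < m + 2), (⟨0, h⟩ : Fin (m+2)) = 0 := fun _ => rfl
  have h11 : ∀ (h : (1:ℕ) < m + 2), (⟨1, h⟩ : Fin (m+2)) = 1 := fun _ => rfl
  simp only [h01, h11]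
  have hij' : π0.symm i ≠ π0.symm j := fun h => hij (by simpa using congrArg π0 h)
  have hd : ∀ σ : Equiv.Perm (Fin (m+2)), dkt (π0 * σ) π0 = dkt σ 1 := by
    intro σ
    have := MallowsAux.dkt_mul_left π0 σ 1
    rwa [mul_one] at this
  have hdenom : (∑ π : Equiv.Perm (Fin (m+2)), φ ^ dkt π π0) = MallowsAux.T φ (m+2) := by
    rw [MallowsAux.T_def]
    refine (Fintype.sum_equiv (Equiv.mulLeft π0) (fun σ => φ ^ dkt σ 1)
      (fun π => φ ^ dkt π π0) (fun σ => ?_)).symm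
    simp only [Equiv.coe_mulLeft]
    rw [hd σ]
  have hnum : (∑ π ∈ Finset.univ.filter (fun π : Equiv.Perm (Fin (m+2)) =>
        ({π 0, π 1} : Finset (Fin (m+2))) = {i, j}), φ ^ dkt π π0)
      = ∑ σ ∈ Finset.univ.filter (fun σ : Equiv.Perm (Fin (m+2)) =>
        ({σ 0, σ 1} : Finset (Fin (m+2))) = {π0.symm i, π0.symm j}), φ ^ dkt σ 1 := by
    rw [Finset.sum_filter, Finset.sum_filter]
    refine (Fintype.sum_equiv (Equiv.mulLeft π0)
      (fun σ => if ({σ 0, σ 1} : Finset (Fin (m+2))) = {π0.symm i, π0.symm j}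
        then φ ^ dkt σ 1 else 0)
      (fun π => if ({π 0, π 1} : Finset (Fin (m+2))) = {i, j} then φ ^ dkt π π0 else 0)
      (fun σ => ?_)).symm
    simp only [Equiv.coe_mulLeft, Equiv.Perm.mul_apply]
    have hne : σ 0 ≠ σ 1 := fun h => (Fin.zero_ne_one' (n := m+1)) (σ.injective h)
    have hne2 : π0 (σ 0) ≠ π0 (σ 1) := fun h => hne (π0.injective h)
    have hcond : (({π0 (σ 0), π0 (σ 1)} : Finset (Fin (m+2))) = {i, j})
        ↔ (({σ 0, σ 1} : Finset (Fin (m+2))) = {π0.symm i, π0.symm j}) := by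
      rw [MallowsAux.pair_eq hne2 hij, MallowsAux.pair_eq hne hij']
      simp only [Equiv.apply_eq_iff_eq_symm_apply]
    rw [if_congr hcond.symm rfl rfl, hd σ]
    congr 1
  rw [hnum, hdenom, MallowsAux.core_num φ (π0.symm i) (π0.symm j) hij']
  rw [MallowsAux.T_succ2 φ m, show m + 2 - 1 = m + 1 from rfl]
  set A := ((π0.symm i : Fin (m+2)) : ℕ) with hA
  set B := ((π0.symm j : Fin (m+2)) : ℕ) with hB
  have hABne : A ≠ B := fun h => hij' (Fin.ext h)
  have hZ1 : (0:ℝ) < ∑ k ∈ Finset.range (m+1), φ ^ k :=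
    Finset.sum_pos (fun k _ => pow_pos h0 k) (Finset.nonempty_range_iff.mpr (by omega))
  have hZ2 : (0:ℝ) < ∑ k ∈ Finset.range (m+2), φ ^ k :=
    Finset.sum_pos (fun k _ => pow_pos h0 k) (Finset.nonempty_range_iff.mpr (by omega))
  have hTm := MallowsAux.T_pos h0 m
  rw [← add_mul]
  rcases hABne.lt_or_gt with hlt | hlt
  · have hb1 : MallowsAux.bstar A B = B - 1 := by
      unfold MallowsAux.bstar; rw [if_neg (by omega)]
    have hb2 : MallowsAux.bstar B A = A := by
      unfold MallowsAux.bstar; rw [if_pos hlt]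
    rw [hb1, hb2, show A + (B - 1) = A + B - 1 from by omega,
      show B + A = A + B from by omega]
    exact MallowsAux.final_arith φ _ _ _ h0 hZ1 hZ2 hTm (A + B) A B (by omega) rfl
  · have hb1 : MallowsAux.bstar A B = B := by
      unfold MallowsAux.bstar; rw [if_pos hlt]
    have hb2 : MallowsAux.bstar B A = A - 1 := by
      unfold MallowsAux.bstar; rw [if_neg (by omega)]
    rw [hb1, hb2, show B + (A - 1) = A + B - 1 from by omega,
      add_comm (φ ^ (A + B)) (φ ^ (A + B - 1))]
    exact MallowsAux.final_arith φ _ _ _ h0 hZ1 hZ2 hTm (A + B) A B (by omega) rfl
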